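/- Let S be a compact metric space and f : S → S a homeomorphism such that the family of iterates {fⁿ : n ∈ ℤ} is relatively compact in C(S,S) for the topology of uniform convergence. Then there exists a strictly increasing sequence (m_k) of positive integers such that f^{m_k} converges uniformly on S to the identity map of S. -/

import Mathlib

open Filter Topology

/-- if `S` is a compact metric space and `f : S → S` is a homeomorphism whose
family of iterates `{fⁿ : n ∈ ℤ}` is relatively compact in `C(S,S)` for the topology of
uniform convergence, then some subsequence `f^{m_k}` with `m_k` strictly increasing positive
integers converges uniformly to the identity of `S`. -/
theorem stmt2 (S : Type*) [MetricSpace S] [CompactSpace S] (f : S ≃ₜ S)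
    (hrc : IsCompact (closure {h : C(S, S) | ∃ n : ℤ, ⇑h = ⇑(f.toEquiv ^ n)})) :
    ∃ m : ℕ → ℕ, StrictMono m ∧ (∀ k, 0 < m k) ∧
      TendstoUniformly (fun k => ⇑(f.toEquiv ^ (m k : ℤ))) id atTop := by
  -- continuity of integer powers of `f.toEquiv`
  have hcont : ∀ n : ℤ, Continuous ⇑(f.toEquiv ^ n) := by
    intro n
    induction n using Int.induction_on with
    | zero => simpa using continuous_id
    | succ k ih =>
        have h1 : (f.toEquiv ^ ((k : ℤ) + 1)) = f.toEquiv ^ (k : ℤ) * f.toEquiv := by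
          rw [zpow_add, zpow_one]
        rw [h1, Equiv.Perm.coe_mul]
        exact ih.comp f.continuous
    | pred k ih =>
        have h1 : (f.toEquiv ^ (-(k : ℤ) - 1)) = f.toEquiv ^ (-(k : ℤ)) * f.toEquiv⁻¹ := by
          rw [sub_eq_add_neg, zpow_add, zpow_neg_one]
        rw [h1, Equiv.Perm.coe_mul]
        have hsymm : Continuous ⇑(f.toEquiv⁻¹) := f.symm.continuous
        exact ih.comp hsymm
  set g : ℕ → C(S, S) := fun n => ⟨⇑(f.toEquiv ^ (n : ℤ)), hcont n⟩ with hg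
  have hmem : ∀ n : ℕ, g n ∈ closure {h : C(S, S) | ∃ n : ℤ, ⇑h = ⇑(f.toEquiv ^ n)} :=
    fun n => subset_closure ⟨(n : ℤ), rfl⟩
  obtain ⟨L, -, φ, hφ, hTL⟩ := hrc.tendsto_subseq hmem
  -- the key: sup-distance between `f^q` and `f^p` bounds `dist (f^{q-p} y) y`
  have hkey : ∀ p q : ℕ, p ≤ q → ∀ y : S,
      dist ((f.toEquiv ^ ((q - p : ℕ) : ℤ)) y) y ≤ dist (g q) (g p) := by
    intro p q hpq y
    set x := (f.toEquiv ^ (-(p : ℤ))) y with hx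
    have h1 : g q x = (f.toEquiv ^ ((q - p : ℕ) : ℤ)) y := by
      show (f.toEquiv ^ (q : ℤ)) ((f.toEquiv ^ (-(p : ℤ))) y) = _
      rw [← Equiv.Perm.mul_apply, ← zpow_add]
      congr 2
      omega
    have h2 : g p x = y := by
      show (f.toEquiv ^ (p : ℤ)) ((f.toEquiv ^ (-(p : ℤ))) y) = y
      rw [← Equiv.Perm.mul_apply, ← zpow_add, add_neg_cancel, zpow_zero, Equiv.Perm.one_apply]
    calc dist ((f.toEquiv ^ ((q - p : ℕ) : ℤ)) y) y = dist (g q x) (g p x) := by rw [h1, h2]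
      _ ≤ dist (g q) (g p) := ContinuousMap.dist_apply_le_dist x
  have hTL' := Metric.tendsto_atTop.1 hTL
  choose I hI using fun k : ℕ => hTL' (1 / ((k : ℝ) + 1)) (by positivity)
  -- strict monotone sequences grow at least linearly
  have hadd : ∀ a t : ℕ, φ a + t ≤ φ (a + t) := by
    intro a t
    induction t with
    | zero => simp
    | succ t ih =>
        have h1 := hφ (Nat.lt_succ_self (a + t))
        have h2 : a + (t + 1) = (a + t).succ := by omega
        rw [h2]
        omega
  -- recursively defined gaps
  set d : ℕ → ℕ := fun k =>
    Nat.rec (φ (I 0 + 1) - φ (I 0)) (fun k dk => φ (I (k + 1) + (dk + 1)) - φ (I (k + 1))) k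
    with hdd
  have hd0 : 0 < d 0 := by
    have := hadd (I 0) 1
    show 0 < φ (I 0 + 1) - φ (I 0)
    omega
  have hdsucc : ∀ k, d k < d (k + 1) := by
    intro k
    have := hadd (I (k + 1)) (d k + 1)
    show d k < φ (I (k + 1) + (d k + 1)) - φ (I (k + 1))
    omega
  have hdpos : ∀ k, 0 < d k := by
    intro k
    induction k with
    | zero => exact hd0
    | succ k ih => exact lt_trans ih (hdsucc k)
  -- smallness of `dist (f^{d k} y) y`
  have hgen : ∀ (k a t : ℕ), d k = φ (a + t) - φ a → I k ≤ a → ∀ y : S,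
      dist ((f.toEquiv ^ (d k : ℤ)) y) y < 2 / ((k : ℝ) + 1) := by
    intro k a t hdk ha y
    have hple : φ a ≤ φ (a + t) := hφ.monotone (Nat.le_add_right a t)
    have h1 := hkey (φ a) (φ (a + t)) hple y
    rw [← hdk] at h1
    have h2 : dist (g (φ (a + t))) (g (φ a)) ≤
        dist (g (φ (a + t))) L + dist (g (φ a)) L := dist_triangle_right _ _ _
    have h3 : dist (g (φ (a + t))) L < 1 / ((k : ℝ) + 1) :=
      hI k (a + t) (le_trans ha (Nat.le_add_right a t))
    have h4 : dist (g (φ a)) L < 1 / ((k : ℝ) + 1) := hI k a ha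
    have : dist ((f.toEquiv ^ (d k : ℤ)) y) y < 1 / ((k : ℝ) + 1) + 1 / ((k : ℝ) + 1) := by
      linarith
    calc dist ((f.toEquiv ^ (d k : ℤ)) y) y < 1 / ((k : ℝ) + 1) + 1 / ((k : ℝ) + 1) := this
      _ = 2 / ((k : ℝ) + 1) := by ring
  have hsmall : ∀ k, ∀ y : S, dist ((f.toEquiv ^ (d k : ℤ)) y) y < 2 / ((k : ℝ) + 1) := by
    intro k
    cases k with
    | zero => exact hgen 0 (I 0) 1 rfl le_rfl
    | succ k => exact hgen (k + 1) (I (k + 1)) (d k + 1) rfl le_rfl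
  refine ⟨d, strictMono_nat_of_lt_succ hdsucc, hdpos, ?_⟩
  rw [Metric.tendstoUniformly_iff]
  intro ε hε
  have htend : Tendsto (fun k : ℕ => 2 / ((k : ℝ) + 1)) atTop (𝓝 0) := by
    have := tendsto_one_div_add_atTop_nhds_zero_nat (𝕜 := ℝ)
    have h2 := this.const_mul (2 : ℝ)
    simpa [mul_one_div, div_eq_mul_inv] using h2
  filter_upwards [htend.eventually (gt_mem_nhds hε)] with k hk x
  have := hsmall k x
  simp only [id_eq]
  rw [dist_comm]
  linarith
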